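/- For every n ≥ 2, the generalized edge reconstruction conjecture fails: there exist k ≥ 1 and two distinct multisets M ≠ M', each consisting of k isomorphism classes of graphs with exactly n edges, such that Σ_{[G] ∈ M} ED(G) = Σ_{[G'] ∈ M'} ED(G') as multisets. That is, some collection of n-edge graphs G₁, …, G_k is not reconstructable up to isomorphism from the union of the multisets ED(G₁), …, ED(G_k). -/

import Mathlib

open SimpleGraph

/-- A finite simple graph, packaged with its (finite) vertex type. -/
structure FGraph : Type 1 where
  V : Type
  [finV : Finite V]
  graph : SimpleGraph V

attribute [instance] FGraph.finV

namespace FGraph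

/-- Two finite graphs are isomorphic if there is a graph isomorphism between them. -/
def IsIsoTo (G H : FGraph) : Prop := Nonempty (G.graph ≃g H.graph)

instance setoid : Setoid FGraph where
  r := IsIsoTo
  iseqv := ⟨fun G => ⟨RelIso.refl G.graph.Adj⟩, fun ⟨e⟩ => ⟨e.symm⟩, fun ⟨e⟩ ⟨f⟩ => ⟨e.trans f⟩⟩

end FGraph

/-- Isomorphism classes of finite simple graphs. -/
def GraphClass : Type 1 := Quotient FGraph.setoid

namespace FGraph

/-- The isomorphism class of a finite graph. -/
def cls (G : FGraph) : GraphClass := Quotient.mk _ G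

/-- The number of edges of a finite graph. -/
noncomputable def edgeCount (G : FGraph) : ℕ := G.graph.edgeSet.ncard

/-- The edge-deleted subgraph `G - e`: same vertices, with the edge `e` removed. -/
def deleteEdge (G : FGraph) (e : Sym2 G.V) : FGraph :=
  { V := G.V, graph := G.graph.deleteEdges {e} }

/-- The multiset of edge-deleted subgraphs of `G` (one for each edge), as graphs. -/
noncomputable def deckGraphs (G : FGraph) : Multiset FGraph :=
  (G.graph.edgeSet.toFinite.toFinset.val).map fun e => G.deleteEdge e

/-- The edge deck of `G` : the multiset of isomorphism classes of the edge-deleted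
subgraphs `G - e`, one for each edge `e` of `G`. -/
noncomputable def edgeDeck (G : FGraph) : Multiset GraphClass :=
  G.deckGraphs.map cls

lemma exists_of_mem_edgeDeck {G : FGraph} {c : GraphClass} (hc : c ∈ G.edgeDeck) :
    ∃ H : FGraph, H.cls = c ∧ H.edgeCount = G.edgeCount - 1 := by
  classical
  rw [edgeDeck, deckGraphs, Multiset.map_map] at hc
  obtain ⟨e, he, rfl⟩ := Multiset.mem_map.mp hc
  refine ⟨G.deleteEdge e, rfl, ?_⟩
  have he' : e ∈ G.graph.edgeSet := by
    simpa using (Set.Finite.mem_toFinset _).mp he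
  simp only [edgeCount, deleteEdge, SimpleGraph.edgeSet_deleteEdges]
  exact Set.ncard_sdiff_singleton_of_mem he'

/-- The disjoint union of two finite graphs. -/
def disjUnion (G H : FGraph) : FGraph :=
  { V := G.V ⊕ H.V, graph := G.graph ⊕g H.graph }

end FGraph

/-- `𝒢 n` is the set of isomorphism classes of graphs with exactly `n` edges. -/
def GClass (n : ℕ) : Type 1 :=
  {c : GraphClass // ∃ G : FGraph, G.cls = c ∧ G.edgeCount = n}

/-- Given a graph `G` with `n` edges, sum a function `f` over the edge deck of `G`,
regarded as a multiset of isomorphism classes of graphs with `n - 1` edges. -/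
noncomputable def FGraph.edgeDeckSum (n : ℕ) (G : FGraph) (hG : G.edgeCount = n)
    {β : Type*} [AddCommMonoid β] (f : GClass (n - 1) → β) : β :=
  (G.edgeDeck.attach.map fun c => f ⟨c.1, by
    obtain ⟨H, h1, h2⟩ := FGraph.exists_of_mem_edgeDeck c.2
    exact ⟨H, h1, by rw [h2, hG]⟩⟩).sum

/-- The subgroup of relations defining `K₀(Γ_{n,n-1})`: for every graph `G` with `n`
edges, `[G] = Σ_{C ∈ ED(G)} [C]`. -/
def K0Rel (n : ℕ) : AddSubgroup (FreeAbelianGroup (GClass n ⊕ GClass (n - 1))) :=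
  AddSubgroup.closure
    {x | ∃ (G : FGraph) (hG : G.edgeCount = n),
      x = FreeAbelianGroup.of (Sum.inl ⟨G.cls, G, rfl, hG⟩)
        - G.edgeDeckSum n hG (fun c => FreeAbelianGroup.of (Sum.inr c))}

/-- `K₀(Γ_{n,n-1})`: the free abelian group on `𝒢 n ⊔ 𝒢 (n-1)` modulo the edge-deck
relations. -/
abbrev K0Gamma (n : ℕ) : Type 1 :=
  FreeAbelianGroup (GClass n ⊕ GClass (n - 1)) ⧸ K0Rel n

/-- The map `ι_n : 𝒢 n → K₀(Γ_{n,n-1})` sending a class to its image in the quotient. -/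
noncomputable def iotaCls (n : ℕ) (c : GClass n) : K0Gamma n :=
  QuotientAddGroup.mk (FreeAbelianGroup.of (Sum.inl c))

/-- Generalized edge reconstruction fails for `n`-edge graphs with `k` pieces: there are
two distinct multisets of `k` isomorphism classes of graphs with exactly `n` edges whose
total edge decks agree. -/
def GERFails (n k : ℕ) : Prop :=
  ∃ M M' : Multiset FGraph,
    Multiset.card M = k ∧ Multiset.card M' = k ∧
    (∀ G ∈ M, G.edgeCount = n) ∧ (∀ G ∈ M', G.edgeCount = n) ∧
    M.map FGraph.cls ≠ M'.map FGraph.cls ∧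
    (M.map FGraph.edgeDeck).sum = (M'.map FGraph.edgeDeck).sum

/-- `kmin n` is the least `k ≥ 1` for which generalized edge reconstruction fails for
`n`-edge graphs. -/
noncomputable def kmin (n : ℕ) : ℕ := sInf {k | 1 ≤ k ∧ GERFails n k}

/-- The graph `2K₂`: four vertices, two disjoint edges. -/
def twoK2 : FGraph :=
  { V := Fin 4, graph := SimpleGraph.fromEdgeSet {s(0, 1), s(2, 3)} }

/-- The graph `P₃ ⊔ K₁`: a two-edge path together with an isolated vertex. -/
def p3K1 : FGraph :=
  { V := Fin 4, graph := SimpleGraph.fromEdgeSet {s(0, 1), s(1, 2)} }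

/-- The graph `K₃ ⊔ K₁`: a triangle together with an isolated vertex. -/
def k3K1 : FGraph :=
  { V := Fin 4, graph := SimpleGraph.fromEdgeSet {s(0, 1), s(1, 2), s(0, 2)} }

/-- The star `K_{1,3}`: a center vertex adjacent to three leaves. -/
def k13 : FGraph :=
  { V := Fin 4, graph := SimpleGraph.fromEdgeSet {s(0, 1), s(0, 2), s(0, 3)} }


namespace GERAux
open SimpleGraph FGraph


/-- disjoint union respects isomorphism. -/
def sumIso {α β α' β' : Type} {G : SimpleGraph α} {H : SimpleGraph β}
    {G' : SimpleGraph α'} {H' : SimpleGraph β'} (e : G ≃g G') (f : H ≃g H') :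
    G ⊕g H ≃g G' ⊕g H' where
  toEquiv := Equiv.sumCongr e.toEquiv f.toEquiv
  map_rel_iff' := by
    rintro (a|a) (b|b) <;> simp [e.map_rel_iff, f.map_rel_iff]

lemma disjUnion_congr {G G' H H' : FGraph} (hG : G ≈ G') (hH : H ≈ H') :
    G.disjUnion H ≈ G'.disjUnion H' := by
  obtain ⟨e⟩ := hG; obtain ⟨f⟩ := hH
  exact ⟨sumIso e f⟩

/-- multiplication (disjoint union) on classes. -/
def mulC : GraphClass → GraphClass → GraphClass :=
  Quotient.map₂ FGraph.disjUnion (fun _ _ h _ _ h' => disjUnion_congr h h')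

lemma mulC_cls (G H : FGraph) : mulC G.cls H.cls = (G.disjUnion H).cls := rfl



lemma sym2_map_inl_eq {α β : Type} {e : Sym2 α} {a b : α} :
    Sym2.map (Sum.inl : α → α ⊕ β) e = s(Sum.inl a, Sum.inl b) ↔ e = s(a, b) := by
  constructor
  · intro h
    have := Sym2.map.injective (Sum.inl_injective) (f := (Sum.inl : α → α ⊕ β))
    exact this (by simpa [FGraph.disjUnion] using h)
  · rintro rfl; rfl

lemma inr_not_mem_map_inl {α β : Type} (e : Sym2 α) (b : β) :
    (Sum.inr b : α ⊕ β) ∉ Sym2.map Sum.inl e := by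
  simp [Sym2.mem_map]

lemma edgeSet_sum {α β : Type} (G : SimpleGraph α) (H : SimpleGraph β) :
    (G ⊕g H).edgeSet = Sym2.map Sum.inl '' G.edgeSet ∪ Sym2.map Sum.inr '' H.edgeSet := by
  ext e
  induction e with
  | _ x y =>
    constructor
    · intro h
      rw [mem_edgeSet] at h
      match x, y with
      | Sum.inl a, Sum.inl b =>
        exact Or.inl ⟨s(a, b), by rw [mem_edgeSet]; exact h, rfl⟩
      | Sum.inr a, Sum.inr b =>
        exact Or.inr ⟨s(a, b), by rw [mem_edgeSet]; exact h, rfl⟩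
      | Sum.inl a, Sum.inr b => exact absurd h (by simp)
      | Sum.inr a, Sum.inl b => exact absurd h (by simp)
    · rintro (⟨f, hf, h⟩ | ⟨f, hf, h⟩) <;> rw [← h] <;>
      · induction f with
        | _ u v => rw [mem_edgeSet] at hf; rw [Sym2.map_pair_eq, mem_edgeSet]; simpa using hf


noncomputable def edgeFinset' (G : FGraph) : Finset (Sym2 G.V) :=
  G.graph.edgeSet.toFinite.toFinset

lemma mem_edgeFinset' {G : FGraph} {e : Sym2 G.V} :
    e ∈ edgeFinset' G ↔ e ∈ G.graph.edgeSet := Set.Finite.mem_toFinset _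

lemma edgeDeck_eq (G : FGraph) :
    G.edgeDeck = (edgeFinset' G).val.map (fun e => (G.deleteEdge e).cls) := by
  rw [edgeDeck, deckGraphs, Multiset.map_map]; rfl

lemma edgeCount_eq (G : FGraph) :
    G.edgeCount = Multiset.card (edgeFinset' G).val := by
  rw [edgeCount, Set.ncard_eq_toFinset_card _ G.graph.edgeSet.toFinite]; rfl

lemma not_mem_map_inl {α β : Type} (e : Sym2 α) (b : β) :
    (Sum.inr b : α ⊕ β) ∉ Sym2.map Sum.inl e := by simp [Sym2.mem_map]

lemma not_mem_map_inr {α β : Type} (e : Sym2 β) (a : α) :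
    (Sum.inl a : α ⊕ β) ∉ Sym2.map Sum.inr e := by simp [Sym2.mem_map]

lemma edgeVal_disjUnion (G H : FGraph) :
    (edgeFinset' (G.disjUnion H)).val
      = (edgeFinset' G).val.map (Sym2.map Sum.inl)
        + (edgeFinset' H).val.map (Sym2.map Sum.inr) := by
  have hnd : ((edgeFinset' G).val.map (Sym2.map Sum.inl)
      + (edgeFinset' H).val.map (Sym2.map Sum.inr)).Nodup := by
    rw [Multiset.nodup_add]
    refine ⟨(edgeFinset' G).nodup.map (Sym2.map.injective Sum.inl_injective),
      (edgeFinset' H).nodup.map (Sym2.map.injective Sum.inr_injective), ?_⟩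
    rw [Multiset.disjoint_left]
    rintro a ha ha'
    obtain ⟨e, _, rfl⟩ := Multiset.mem_map.mp ha
    obtain ⟨f, _, hf⟩ := Multiset.mem_map.mp ha'
    induction f with
    | _ u v =>
      have : (Sum.inr u : G.V ⊕ H.V) ∈ Sym2.map Sum.inl e := by
        rw [← hf, Sym2.map_pair_eq]; simp
      exact not_mem_map_inl e u this
  refine Multiset.Nodup.ext (edgeFinset' _).nodup hnd |>.mpr (fun e => ?_)
  rw [Finset.mem_val, mem_edgeFinset']
  show e ∈ (G.graph ⊕g H.graph).edgeSet ↔ _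
  revert e; change ∀ e : Sym2 (G.V ⊕ H.V), e ∈ (G.graph ⊕g H.graph).edgeSet ↔ e ∈ ((edgeFinset' G).val.map (Sym2.map Sum.inl) + (edgeFinset' H).val.map (Sym2.map Sum.inr) : Multiset (Sym2 (G.V ⊕ H.V))); intro e
  rw [edgeSet_sum]
  simp only [Multiset.mem_add, Multiset.mem_map, Set.mem_union, Set.mem_image,
    Finset.mem_val, mem_edgeFinset']

lemma pair_inl_eq_map_inl {α β : Type} {a b : α} {e : Sym2 α} :
    s(Sum.inl a, Sum.inl b) = Sym2.map (Sum.inl : α → α ⊕ β) e ↔ s(a, b) = e := by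
  rw [eq_comm, sym2_map_inl_eq, eq_comm]

lemma pair_inr_ne_map_inl {α β : Type} {a b : β} {e : Sym2 α} :
    s((Sum.inr a : α ⊕ β), Sum.inr b) ≠ Sym2.map Sum.inl e := by
  intro h
  exact not_mem_map_inl e a (h ▸ Sym2.mem_mk_left _ _)

lemma deleteEdges_sum_inl {α β : Type} (G : SimpleGraph α) (H : SimpleGraph β) (e : Sym2 α) :
    (G ⊕g H).deleteEdges {Sym2.map Sum.inl e} = (G.deleteEdges {e}) ⊕g H := by
  ext x y
  rcases x with a | a <;> rcases y with b | b <;>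
    simp [deleteEdges_adj, pair_inl_eq_map_inl, pair_inr_ne_map_inl]

lemma cls_deleteEdge_inl (G H : FGraph) (e : Sym2 G.V) :
    ((G.disjUnion H).deleteEdge (Sym2.map Sum.inl e)).cls
      = ((G.deleteEdge e).disjUnion H).cls := by
  have h : (G.disjUnion H).deleteEdge (Sym2.map Sum.inl e)
      = (G.deleteEdge e).disjUnion H := by
    show FGraph.mk _ _ = FGraph.mk _ _
    congr 1
    exact deleteEdges_sum_inl G.graph H.graph e
  rw [h]



lemma sym2_map_inr_eq {α β : Type} {e : Sym2 β} {a b : β} :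
    Sym2.map (Sum.inr : β → α ⊕ β) e = s(Sum.inr a, Sum.inr b) ↔ e = s(a, b) := by
  constructor
  · intro h
    exact Sym2.map.injective (Sum.inr_injective) (by simpa [FGraph.disjUnion] using h)
  · rintro rfl; rfl

lemma pair_inr_eq_map_inr {α β : Type} {a b : β} {e : Sym2 β} :
    s((Sum.inr a : α ⊕ β), Sum.inr b) = Sym2.map Sum.inr e ↔ s(a, b) = e := by
  rw [eq_comm, sym2_map_inr_eq, eq_comm]

lemma pair_inl_ne_map_inr {α β : Type} {a b : α} {e : Sym2 β} :
    s((Sum.inl a : α ⊕ β), Sum.inl b) ≠ Sym2.map Sum.inr e := by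
  intro h
  exact not_mem_map_inr e a (h ▸ Sym2.mem_mk_left _ _)

lemma deleteEdges_sum_inr {α β : Type} (G : SimpleGraph α) (H : SimpleGraph β) (e : Sym2 β) :
    (G ⊕g H).deleteEdges {Sym2.map Sum.inr e} = G ⊕g (H.deleteEdges {e}) := by
  ext x y
  rcases x with a | a <;> rcases y with b | b <;>
    simp [deleteEdges_adj, pair_inr_eq_map_inr, pair_inl_ne_map_inr]

lemma cls_deleteEdge_inr (G H : FGraph) (e : Sym2 H.V) :
    ((G.disjUnion H).deleteEdge (Sym2.map Sum.inr e)).cls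
      = (G.disjUnion (H.deleteEdge e)).cls := by
  have h : (G.disjUnion H).deleteEdge (Sym2.map Sum.inr e)
      = G.disjUnion (H.deleteEdge e) := by
    show FGraph.mk _ _ = FGraph.mk _ _
    congr 1
    exact deleteEdges_sum_inr G.graph H.graph e
  rw [h]

lemma edgeDeck_disjUnion (G H : FGraph) :
    (G.disjUnion H).edgeDeck
      = G.edgeDeck.map (fun c => mulC c H.cls) + H.edgeDeck.map (fun c => mulC G.cls c) := by
  rw [edgeDeck_eq, edgeVal_disjUnion]
  show Multiset.map (fun e : Sym2 (G.V ⊕ H.V) => ((G.disjUnion H).deleteEdge e).cls) ((edgeFinset' G).val.map (Sym2.map Sum.inl) + (edgeFinset' H).val.map (Sym2.map Sum.inr) : Multiset (Sym2 (G.V ⊕ H.V))) = _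
  rw [Multiset.map_add, Multiset.map_map, Multiset.map_map,
    edgeDeck_eq G, edgeDeck_eq H, Multiset.map_map, Multiset.map_map]
  congr 1 <;> refine Multiset.map_congr rfl (fun e he => ?_)
  · show ((G.disjUnion H).deleteEdge (Sym2.map Sum.inl e)).cls = _
    rw [cls_deleteEdge_inl]; rfl
  · show ((G.disjUnion H).deleteEdge (Sym2.map Sum.inr e)).cls = _
    rw [cls_deleteEdge_inr]; rfl

lemma edgeCount_disjUnion (G H : FGraph) :
    (G.disjUnion H).edgeCount = G.edgeCount + H.edgeCount := by
  rw [edgeCount_eq, edgeVal_disjUnion]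
  show Multiset.card ((edgeFinset' G).val.map (Sym2.map Sum.inl) + (edgeFinset' H).val.map (Sym2.map Sum.inr) : Multiset (Sym2 (G.V ⊕ H.V))) = _
  rw [Multiset.card_add, Multiset.card_map,
    Multiset.card_map, edgeCount_eq, edgeCount_eq]



def cherryProp {α : Type} (G : SimpleGraph α) (p : α × α × α) : Prop :=
  G.Adj p.1 p.2.1 ∧ G.Adj p.2.1 p.2.2 ∧ p.1 ≠ p.2.2

def triProp {α : Type} (G : SimpleGraph α) (p : α × α × α) : Prop :=
  G.Adj p.1 p.2.1 ∧ G.Adj p.2.1 p.2.2 ∧ G.Adj p.2.2 p.1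

noncomputable def cherries (G : FGraph) : ℕ := Nat.card {p // cherryProp G.graph p}
noncomputable def tris (G : FGraph) : ℕ := Nat.card {p // triProp G.graph p}
noncomputable def hOf (G : FGraph) : ℕ := cherries G + tris G

/-- transport along an iso -/
def isoTriple {α β : Type} (φ : α ≃ β) : α × α × α ≃ β × β × β :=
  φ.prodCongr (φ.prodCongr φ)

lemma cherries_congr {G H : FGraph} (h : G ≈ H) : cherries G = cherries H := by
  obtain ⟨φ⟩ := h
  refine Nat.card_congr (Equiv.subtypeEquiv (isoTriple φ.toEquiv) (fun p => ?_))
  obtain ⟨a, b, c⟩ := p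
  simp [cherryProp, isoTriple, φ.map_adj_iff, φ.toEquiv.injective.ne_iff]

lemma tris_congr {G H : FGraph} (h : G ≈ H) : tris G = tris H := by
  obtain ⟨φ⟩ := h
  refine Nat.card_congr (Equiv.subtypeEquiv (isoTriple φ.toEquiv) (fun p => ?_))
  obtain ⟨a, b, c⟩ := p
  simp [triProp, isoTriple, φ.map_adj_iff]

lemma hOf_congr {G H : FGraph} (h : G ≈ H) : hOf G = hOf H := by
  rw [hOf, hOf, cherries_congr h, tris_congr h]

section sumsplit
variable {α β : Type} (G : SimpleGraph α) (H : SimpleGraph β)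

lemma adj_sum_left {x y : α ⊕ β} (h : (G ⊕g H).Adj x y) :
    (∃ a b, x = Sum.inl a ∧ y = Sum.inl b) ∨ (∃ a b, x = Sum.inr a ∧ y = Sum.inr b) := by
  rcases x with a | a <;> rcases y with b | b
  · exact Or.inl ⟨a, b, rfl, rfl⟩
  · exact absurd h (by simp)
  · exact absurd h (by simp)
  · exact Or.inr ⟨a, b, rfl, rfl⟩

end sumsplit

lemma cherries_disjUnion (G H : FGraph) :
    cherries (G.disjUnion H) = cherries G + cherries H := by
  rw [cherries, cherries, cherries, ← Nat.card_sum]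
  apply Nat.card_congr
  apply Equiv.symm
  refine Equiv.ofBijective (fun p => p.elim
    (fun q => ⟨(Sum.inl q.1.1, Sum.inl q.1.2.1, Sum.inl q.1.2.2), ?_⟩)
    (fun q => ⟨(Sum.inr q.1.1, Sum.inr q.1.2.1, Sum.inr q.1.2.2), ?_⟩)) ⟨?_, ?_⟩
  · obtain ⟨h1, h2, h3⟩ := q.2
    exact ⟨by simpa [FGraph.disjUnion] using h1, by simpa [FGraph.disjUnion] using h2, fun hc => h3 (Sum.inl.inj hc)⟩
  · obtain ⟨h1, h2, h3⟩ := q.2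
    exact ⟨by simpa [FGraph.disjUnion] using h1, by simpa [FGraph.disjUnion] using h2, fun hc => h3 (Sum.inr.inj hc)⟩
  · rintro (⟨⟨a,b,c⟩,h⟩|⟨⟨a,b,c⟩,h⟩) (⟨⟨a',b',c'⟩,h'⟩|⟨⟨a',b',c'⟩,h'⟩) heq <;>
      simp only [Sum.elim_inl, Sum.elim_inr, Subtype.mk.injEq, Prod.mk.injEq, Sum.inl.injEq, Sum.inr.injEq, FGraph.disjUnion] at heq <;>
      simp_all <;>
      first
        | exact ⟨Sum.inl.inj heq.1, Sum.inl.inj heq.2.1, Sum.inl.inj heq.2.2⟩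
        | exact ⟨Sum.inr.inj heq.1, Sum.inr.inj heq.2.1, Sum.inr.inj heq.2.2⟩
  · rintro ⟨⟨x, y, z⟩, h1, h2, h3⟩
    rcases adj_sum_left _ _ h1 with ⟨a, b, rfl, rfl⟩ | ⟨a, b, rfl, rfl⟩ <;>
      rcases adj_sum_left _ _ h2 with ⟨b', c, hb, rfl⟩ | ⟨b', c, hb, rfl⟩
    · cases hb
      exact ⟨Sum.inl ⟨(a, b, c), by simpa [FGraph.disjUnion] using h1, by simpa [FGraph.disjUnion] using h2,
        fun hc => h3 (congrArg Sum.inl hc)⟩, rfl⟩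
    · cases hb
    · cases hb
    · cases hb
      exact ⟨Sum.inr ⟨(a, b, c), by simpa [FGraph.disjUnion] using h1, by simpa [FGraph.disjUnion] using h2,
        fun hc => h3 (congrArg Sum.inr hc)⟩, rfl⟩


lemma tris_disjUnion (G H : FGraph) :
    tris (G.disjUnion H) = tris G + tris H := by
  rw [tris, tris, tris, ← Nat.card_sum]
  apply Nat.card_congr
  apply Equiv.symm
  refine Equiv.ofBijective (fun p => p.elim
    (fun q => ⟨(Sum.inl q.1.1, Sum.inl q.1.2.1, Sum.inl q.1.2.2), ?_⟩)
    (fun q => ⟨(Sum.inr q.1.1, Sum.inr q.1.2.1, Sum.inr q.1.2.2), ?_⟩)) ⟨?_, ?_⟩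
  · obtain ⟨h1, h2, h3⟩ := q.2
    exact ⟨by simpa [FGraph.disjUnion] using h1, by simpa [FGraph.disjUnion] using h2, by simpa [FGraph.disjUnion] using h3⟩
  · obtain ⟨h1, h2, h3⟩ := q.2
    exact ⟨by simpa [FGraph.disjUnion] using h1, by simpa [FGraph.disjUnion] using h2, by simpa [FGraph.disjUnion] using h3⟩
  · rintro (⟨⟨a,b,c⟩,h⟩|⟨⟨a,b,c⟩,h⟩) (⟨⟨a',b',c'⟩,h'⟩|⟨⟨a',b',c'⟩,h'⟩) heq <;>
      simp only [Sum.elim_inl, Sum.elim_inr, Subtype.mk.injEq, Prod.mk.injEq,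
        Sum.inl.injEq, Sum.inr.injEq, FGraph.disjUnion] at heq <;>
      simp_all <;>
      first
        | exact ⟨Sum.inl.inj heq.1, Sum.inl.inj heq.2.1, Sum.inl.inj heq.2.2⟩
        | exact ⟨Sum.inr.inj heq.1, Sum.inr.inj heq.2.1, Sum.inr.inj heq.2.2⟩
  · rintro ⟨⟨x, y, z⟩, h1, h2, h3⟩
    rcases adj_sum_left _ _ h1 with ⟨a, b, rfl, rfl⟩ | ⟨a, b, rfl, rfl⟩ <;>
      rcases adj_sum_left _ _ h2 with ⟨b', c, hb, rfl⟩ | ⟨b', c, hb, rfl⟩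
    · cases hb
      exact ⟨Sum.inl ⟨(a, b, c), by simpa [FGraph.disjUnion] using h1, by simpa [FGraph.disjUnion] using h2, by simpa [FGraph.disjUnion] using h3⟩, rfl⟩
    · cases hb
    · cases hb
    · cases hb
      exact ⟨Sum.inr ⟨(a, b, c), by simpa [FGraph.disjUnion] using h1, by simpa [FGraph.disjUnion] using h2, by simpa [FGraph.disjUnion] using h3⟩, rfl⟩

lemma hOf_disjUnion (G H : FGraph) : hOf (G.disjUnion H) = hOf G + hOf H := by
  rw [hOf, hOf, hOf, cherries_disjUnion, tris_disjUnion]; omega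



/-- The one-edge graph on four vertices. -/
def oneK2 : FGraph := { V := Fin 4, graph := SimpleGraph.fromEdgeSet {s(0, 1)} }

instance : DecidableEq twoK2.V := instDecidableEqFin 4
instance : Fintype twoK2.V := Fin.fintype 4
instance : DecidableEq p3K1.V := instDecidableEqFin 4
instance : Fintype p3K1.V := Fin.fintype 4
instance : DecidableEq k3K1.V := instDecidableEqFin 4
instance : Fintype k3K1.V := Fin.fintype 4
instance : DecidableEq k13.V := instDecidableEqFin 4
instance : Fintype k13.V := Fin.fintype 4
instance : DecidableEq oneK2.V := instDecidableEqFin 4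
instance : Fintype oneK2.V := Fin.fintype 4

lemma twoK2_adj (a b : Fin 4) :
    twoK2.graph.Adj a b ↔ (s(a,b) = s(0,1) ∨ s(a,b) = s(2,3)) ∧ a ≠ b := by
  show (SimpleGraph.fromEdgeSet _).Adj a b ↔ _
  rw [SimpleGraph.fromEdgeSet_adj]
  simp [Set.mem_insert_iff]

lemma p3K1_adj (a b : Fin 4) :
    p3K1.graph.Adj a b ↔ (s(a,b) = s(0,1) ∨ s(a,b) = s(1,2)) ∧ a ≠ b := by
  show (SimpleGraph.fromEdgeSet _).Adj a b ↔ _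
  rw [SimpleGraph.fromEdgeSet_adj]
  simp [Set.mem_insert_iff]

lemma k3K1_adj (a b : Fin 4) :
    k3K1.graph.Adj a b ↔ (s(a,b) = s(0,1) ∨ s(a,b) = s(1,2) ∨ s(a,b) = s(0,2)) ∧ a ≠ b := by
  show (SimpleGraph.fromEdgeSet _).Adj a b ↔ _
  rw [SimpleGraph.fromEdgeSet_adj]
  simp [Set.mem_insert_iff]

lemma k13_adj (a b : Fin 4) :
    k13.graph.Adj a b ↔ (s(a,b) = s(0,1) ∨ s(a,b) = s(0,2) ∨ s(a,b) = s(0,3)) ∧ a ≠ b := by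
  show (SimpleGraph.fromEdgeSet _).Adj a b ↔ _
  rw [SimpleGraph.fromEdgeSet_adj]
  simp [Set.mem_insert_iff]

lemma oneK2_adj (a b : Fin 4) :
    oneK2.graph.Adj a b ↔ s(a,b) = s(0,1) ∧ a ≠ b := by
  show (SimpleGraph.fromEdgeSet _).Adj a b ↔ _
  rw [SimpleGraph.fromEdgeSet_adj]
  simp

instance (a b : Fin 4) : Decidable (twoK2.graph.Adj a b) :=
  decidable_of_iff' _ (twoK2_adj a b)
instance (a b : Fin 4) : Decidable (p3K1.graph.Adj a b) :=
  decidable_of_iff' _ (p3K1_adj a b)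
instance (a b : Fin 4) : Decidable (k3K1.graph.Adj a b) :=
  decidable_of_iff' _ (k3K1_adj a b)
instance (a b : Fin 4) : Decidable (k13.graph.Adj a b) :=
  decidable_of_iff' _ (k13_adj a b)
instance (a b : Fin 4) : Decidable (oneK2.graph.Adj a b) :=
  decidable_of_iff' _ (oneK2_adj a b)
instance (a b : twoK2.V) : Decidable (twoK2.graph.Adj a b) :=
  decidable_of_iff' _ (twoK2_adj (id a : Fin 4) (id b : Fin 4))
instance (a b : p3K1.V) : Decidable (p3K1.graph.Adj a b) :=
  decidable_of_iff' _ (p3K1_adj (id a : Fin 4) (id b : Fin 4))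
instance (a b : k3K1.V) : Decidable (k3K1.graph.Adj a b) :=
  decidable_of_iff' _ (k3K1_adj (id a : Fin 4) (id b : Fin 4))
instance (a b : k13.V) : Decidable (k13.graph.Adj a b) :=
  decidable_of_iff' _ (k13_adj (id a : Fin 4) (id b : Fin 4))
instance (a b : oneK2.V) : Decidable (oneK2.graph.Adj a b) :=
  decidable_of_iff' _ (oneK2_adj (id a : Fin 4) (id b : Fin 4))

instance {G : FGraph} (e : Sym2 G.V) [DecidableEq G.V] [h : Fintype G.V] :
    Fintype ((G.deleteEdge e).V) := h
instance {G : FGraph} (e : Sym2 G.V) [h : DecidableEq G.V] :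
    DecidableEq ((G.deleteEdge e).V) := h

instance {G : FGraph} (e : Sym2 G.V) [DecidableEq G.V]
    [∀ a b : G.V, Decidable (G.graph.Adj a b)] (a b : (G.deleteEdge e).V) :
    Decidable ((G.deleteEdge e).graph.Adj a b) :=
  decidable_of_iff' (G.graph.Adj (id a : G.V) (id b : G.V) ∧ ¬ s((id a : G.V), (id b : G.V)) = e) (by
    show (G.graph.deleteEdges {e}).Adj a b ↔ _
    exact (SimpleGraph.deleteEdges_adj (G := G.graph) (s := {e}) (v := a) (w := b)).trans
      (and_congr_right fun _ => not_congr Set.mem_singleton_iff))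

instance (e : Sym2 (Fin 4)) : Fintype (twoK2.deleteEdge e).V := Fin.fintype 4
instance (e : Sym2 (Fin 4)) : DecidableEq (twoK2.deleteEdge e).V := instDecidableEqFin 4
instance (e : Sym2 (Fin 4)) : Fintype (p3K1.deleteEdge e).V := Fin.fintype 4
instance (e : Sym2 (Fin 4)) : DecidableEq (p3K1.deleteEdge e).V := instDecidableEqFin 4
instance (e : Sym2 (Fin 4)) : Fintype (k3K1.deleteEdge e).V := Fin.fintype 4
instance (e : Sym2 (Fin 4)) : DecidableEq (k3K1.deleteEdge e).V := instDecidableEqFin 4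
instance (e : Sym2 (Fin 4)) : Fintype (k13.deleteEdge e).V := Fin.fintype 4
instance (e : Sym2 (Fin 4)) : DecidableEq (k13.deleteEdge e).V := instDecidableEqFin 4
instance (e : Sym2 (Fin 4)) (a b : Fin 4) :
    Decidable ((twoK2.deleteEdge e).graph.Adj a b) :=
  decidable_of_iff' (twoK2.graph.Adj (id a : twoK2.V) (id b : twoK2.V) ∧ ¬ s(a, b) = e)
    ((SimpleGraph.deleteEdges_adj (G := twoK2.graph) (s := {e}) (v := a) (w := b)).trans
      (and_congr_right fun _ => not_congr Set.mem_singleton_iff))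
instance (e : Sym2 (Fin 4)) (a b : Fin 4) :
    Decidable ((p3K1.deleteEdge e).graph.Adj a b) :=
  decidable_of_iff' (p3K1.graph.Adj (id a : p3K1.V) (id b : p3K1.V) ∧ ¬ s(a, b) = e)
    ((SimpleGraph.deleteEdges_adj (G := p3K1.graph) (s := {e}) (v := a) (w := b)).trans
      (and_congr_right fun _ => not_congr Set.mem_singleton_iff))
instance (e : Sym2 (Fin 4)) (a b : Fin 4) :
    Decidable ((k3K1.deleteEdge e).graph.Adj a b) :=
  decidable_of_iff' (k3K1.graph.Adj (id a : k3K1.V) (id b : k3K1.V) ∧ ¬ s(a, b) = e)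
    ((SimpleGraph.deleteEdges_adj (G := k3K1.graph) (s := {e}) (v := a) (w := b)).trans
      (and_congr_right fun _ => not_congr Set.mem_singleton_iff))
instance (e : Sym2 (Fin 4)) (a b : Fin 4) :
    Decidable ((k13.deleteEdge e).graph.Adj a b) :=
  decidable_of_iff' (k13.graph.Adj (id a : k13.V) (id b : k13.V) ∧ ¬ s(a, b) = e)
    ((SimpleGraph.deleteEdges_adj (G := k13.graph) (s := {e}) (v := a) (w := b)).trans
      (and_congr_right fun _ => not_congr Set.mem_singleton_iff))

instance {G : FGraph} [∀ a b : G.V, Decidable (G.graph.Adj a b)] [DecidableEq G.V] :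
    DecidablePred (cherryProp G.graph) := fun p => by
  unfold cherryProp; infer_instance

instance {G : FGraph} [∀ a b : G.V, Decidable (G.graph.Adj a b)] :
    DecidablePred (triProp G.graph) := fun p => by
  unfold triProp; infer_instance

lemma hOf_twoK2 : hOf twoK2 = 0 := by
  rw [hOf, cherries, tris, Nat.card_eq_fintype_card, Nat.card_eq_fintype_card]
  decide +kernel

lemma hOf_p3K1 : hOf p3K1 = 2 := by
  rw [hOf, cherries, tris, Nat.card_eq_fintype_card, Nat.card_eq_fintype_card]
  decide +kernel

lemma hOf_k3K1 : hOf k3K1 = 12 := by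
  rw [hOf, cherries, tris, Nat.card_eq_fintype_card, Nat.card_eq_fintype_card]
  decide +kernel

lemma hOf_k13 : hOf k13 = 6 := by
  rw [hOf, cherries, tris, Nat.card_eq_fintype_card, Nat.card_eq_fintype_card]
  decide +kernel



lemma cls_eq_of_iso {G H : FGraph} (φ : G.graph ≃g H.graph) : G.cls = H.cls :=
  Quotient.sound ⟨φ⟩

lemma edgeVal_twoK2 : (edgeFinset' twoK2).val = ({s(0,1), s(2,3)} : Multiset (Sym2 (Fin 4))) := by
  have h : edgeFinset' twoK2 = (⟨{s(0,1), s(2,3)}, by decide⟩ : Finset (Sym2 (Fin 4))) := by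
    apply Finset.ext
    intro e
    rw [mem_edgeFinset']
    show e ∈ (SimpleGraph.fromEdgeSet _).edgeSet ↔ _
    revert e; change ∀ e : Sym2 (Fin 4), e ∈ (SimpleGraph.fromEdgeSet ({s(0,1), s(2,3)} : Set (Sym2 (Fin 4)))).edgeSet ↔ e ∈ ({s(0,1), s(2,3)} : Multiset (Sym2 (Fin 4))); intro e
    rw [SimpleGraph.edgeSet_fromEdgeSet]
    simp only [Set.mem_diff, Set.mem_insert_iff, Set.mem_singleton_iff, Set.mem_setOf_eq,
      Finset.mem_mk, Multiset.insert_eq_cons, Multiset.mem_cons, Multiset.mem_singleton]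
    constructor
    · rintro ⟨h1, -⟩; exact h1
    · intro h1; refine ⟨h1, ?_⟩; rcases h1 with rfl | rfl <;> decide
  rw [h]


def perm1 : Equiv.Perm (Fin 4) := ⟨(![2,3,0,1] ·), (![2,3,0,1] ·), by decide, by decide⟩
def permId : Equiv.Perm (Fin 4) := ⟨(![0,1,2,3] ·), (![0,1,2,3] ·), by decide, by decide⟩
def perm3 : Equiv.Perm (Fin 4) := ⟨(![3,0,1,2] ·), (![1,2,3,0] ·), by decide, by decide⟩
def perm5 : Equiv.Perm (Fin 4) := ⟨(![2,0,1,3] ·), (![1,2,0,3] ·), by decide, by decide⟩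
def perm6 : Equiv.Perm (Fin 4) := ⟨(![1,0,2,3] ·), (![1,0,2,3] ·), by decide, by decide⟩
def perm8 : Equiv.Perm (Fin 4) := ⟨(![1,3,0,2] ·), (![2,0,3,1] ·), by decide, by decide⟩
def perm9 : Equiv.Perm (Fin 4) := ⟨(![1,0,3,2] ·), (![1,0,3,2] ·), by decide, by decide⟩

lemma cls_del_twoK2_01 : (twoK2.deleteEdge (s(0,1) : Sym2 (Fin 4))).cls = oneK2.cls :=
  cls_eq_of_iso ⟨perm1, fun {a b} => (by intro a b; fin_cases a <;> fin_cases b <;> decide :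
    ∀ a b : Fin 4,
      oneK2.graph.Adj (perm1 a) (perm1 b)
      ↔ (twoK2.deleteEdge (s(0,1) : Sym2 (Fin 4))).graph.Adj a b) a b⟩

lemma cls_del_twoK2_23 : (twoK2.deleteEdge (s(2,3) : Sym2 (Fin 4))).cls = oneK2.cls :=
  cls_eq_of_iso ⟨permId, fun {a b} => (by intro a b; fin_cases a <;> fin_cases b <;> decide :
    ∀ a b : Fin 4,
      oneK2.graph.Adj (permId a) (permId b)
      ↔ (twoK2.deleteEdge (s(2,3) : Sym2 (Fin 4))).graph.Adj a b) a b⟩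

lemma cls_del_p3K1_01 : (p3K1.deleteEdge (s(0,1) : Sym2 (Fin 4))).cls = oneK2.cls :=
  cls_eq_of_iso ⟨perm3, fun {a b} => (by intro a b; fin_cases a <;> fin_cases b <;> decide :
    ∀ a b : Fin 4,
      oneK2.graph.Adj (perm3 a) (perm3 b)
      ↔ (p3K1.deleteEdge (s(0,1) : Sym2 (Fin 4))).graph.Adj a b) a b⟩

lemma cls_del_p3K1_12 : (p3K1.deleteEdge (s(1,2) : Sym2 (Fin 4))).cls = oneK2.cls :=
  cls_eq_of_iso ⟨permId, fun {a b} => (by intro a b; fin_cases a <;> fin_cases b <;> decide :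
    ∀ a b : Fin 4,
      oneK2.graph.Adj (permId a) (permId b)
      ↔ (p3K1.deleteEdge (s(1,2) : Sym2 (Fin 4))).graph.Adj a b) a b⟩

lemma cls_del_k3K1_01 : (k3K1.deleteEdge (s(0,1) : Sym2 (Fin 4))).cls = p3K1.cls :=
  cls_eq_of_iso ⟨perm5, fun {a b} => (by intro a b; fin_cases a <;> fin_cases b <;> decide :
    ∀ a b : Fin 4,
      p3K1.graph.Adj (perm5 a) (perm5 b)
      ↔ (k3K1.deleteEdge (s(0,1) : Sym2 (Fin 4))).graph.Adj a b) a b⟩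

lemma cls_del_k3K1_12 : (k3K1.deleteEdge (s(1,2) : Sym2 (Fin 4))).cls = p3K1.cls :=
  cls_eq_of_iso ⟨perm6, fun {a b} => (by intro a b; fin_cases a <;> fin_cases b <;> decide :
    ∀ a b : Fin 4,
      p3K1.graph.Adj (perm6 a) (perm6 b)
      ↔ (k3K1.deleteEdge (s(1,2) : Sym2 (Fin 4))).graph.Adj a b) a b⟩

lemma cls_del_k3K1_02 : (k3K1.deleteEdge (s(0,2) : Sym2 (Fin 4))).cls = p3K1.cls :=
  cls_eq_of_iso ⟨permId, fun {a b} => (by intro a b; fin_cases a <;> fin_cases b <;> decide :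
    ∀ a b : Fin 4,
      p3K1.graph.Adj (permId a) (permId b)
      ↔ (k3K1.deleteEdge (s(0,2) : Sym2 (Fin 4))).graph.Adj a b) a b⟩

lemma cls_del_k13_01 : (k13.deleteEdge (s(0,1) : Sym2 (Fin 4))).cls = p3K1.cls :=
  cls_eq_of_iso ⟨perm8, fun {a b} => (by intro a b; fin_cases a <;> fin_cases b <;> decide :
    ∀ a b : Fin 4,
      p3K1.graph.Adj (perm8 a) (perm8 b)
      ↔ (k13.deleteEdge (s(0,1) : Sym2 (Fin 4))).graph.Adj a b) a b⟩

lemma cls_del_k13_02 : (k13.deleteEdge (s(0,2) : Sym2 (Fin 4))).cls = p3K1.cls :=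
  cls_eq_of_iso ⟨perm9, fun {a b} => (by intro a b; fin_cases a <;> fin_cases b <;> decide :
    ∀ a b : Fin 4,
      p3K1.graph.Adj (perm9 a) (perm9 b)
      ↔ (k13.deleteEdge (s(0,2) : Sym2 (Fin 4))).graph.Adj a b) a b⟩

lemma cls_del_k13_03 : (k13.deleteEdge (s(0,3) : Sym2 (Fin 4))).cls = p3K1.cls :=
  cls_eq_of_iso ⟨perm6, fun {a b} => (by intro a b; fin_cases a <;> fin_cases b <;> decide :
    ∀ a b : Fin 4,
      p3K1.graph.Adj (perm6 a) (perm6 b)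
      ↔ (k13.deleteEdge (s(0,3) : Sym2 (Fin 4))).graph.Adj a b) a b⟩

lemma edgeVal_p3K1 : (edgeFinset' p3K1).val = ({s(0,1), s(1,2)} : Multiset (Sym2 (Fin 4))) := by
  have h : edgeFinset' p3K1 = (⟨({s(0,1), s(1,2)} : Multiset (Sym2 (Fin 4))), by decide⟩ : Finset (Sym2 (Fin 4))) := by
    apply Finset.ext
    intro e
    rw [mem_edgeFinset']
    show e ∈ (SimpleGraph.fromEdgeSet _).edgeSet ↔ _
    revert e; change ∀ e : Sym2 (Fin 4), e ∈ (SimpleGraph.fromEdgeSet ({s(0,1), s(1,2)} : Set (Sym2 (Fin 4)))).edgeSet ↔ e ∈ ({s(0,1), s(1,2)} : Multiset (Sym2 (Fin 4))); intro e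
    rw [SimpleGraph.edgeSet_fromEdgeSet]
    simp only [Set.mem_diff, Set.mem_insert_iff, Set.mem_singleton_iff, Set.mem_setOf_eq,
      Finset.mem_mk, Multiset.insert_eq_cons, Multiset.mem_cons, Multiset.mem_singleton]
    constructor
    · rintro ⟨h1, -⟩; exact h1
    · intro h1; refine ⟨h1, ?_⟩
      rcases h1 with rfl | rfl | rfl <;> decide
  rw [h]

lemma edgeVal_k3K1 : (edgeFinset' k3K1).val = ({s(0,1), s(1,2), s(0,2)} : Multiset (Sym2 (Fin 4))) := by
  have h : edgeFinset' k3K1 = (⟨({s(0,1), s(1,2), s(0,2)} : Multiset (Sym2 (Fin 4))), by decide⟩ : Finset (Sym2 (Fin 4))) := by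
    apply Finset.ext
    intro e
    rw [mem_edgeFinset']
    show e ∈ (SimpleGraph.fromEdgeSet _).edgeSet ↔ _
    revert e; change ∀ e : Sym2 (Fin 4), e ∈ (SimpleGraph.fromEdgeSet ({s(0,1), s(1,2), s(0,2)} : Set (Sym2 (Fin 4)))).edgeSet ↔ e ∈ ({s(0,1), s(1,2), s(0,2)} : Multiset (Sym2 (Fin 4))); intro e
    rw [SimpleGraph.edgeSet_fromEdgeSet]
    simp only [Set.mem_diff, Set.mem_insert_iff, Set.mem_singleton_iff, Set.mem_setOf_eq,
      Finset.mem_mk, Multiset.insert_eq_cons, Multiset.mem_cons, Multiset.mem_singleton]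
    constructor
    · rintro ⟨h1, -⟩; exact h1
    · intro h1; refine ⟨h1, ?_⟩
      rcases h1 with rfl | rfl | rfl <;> decide
  rw [h]

lemma edgeVal_k13 : (edgeFinset' k13).val = ({s(0,1), s(0,2), s(0,3)} : Multiset (Sym2 (Fin 4))) := by
  have h : edgeFinset' k13 = (⟨({s(0,1), s(0,2), s(0,3)} : Multiset (Sym2 (Fin 4))), by decide⟩ : Finset (Sym2 (Fin 4))) := by
    apply Finset.ext
    intro e
    rw [mem_edgeFinset']
    show e ∈ (SimpleGraph.fromEdgeSet _).edgeSet ↔ _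
    revert e; change ∀ e : Sym2 (Fin 4), e ∈ (SimpleGraph.fromEdgeSet ({s(0,1), s(0,2), s(0,3)} : Set (Sym2 (Fin 4)))).edgeSet ↔ e ∈ ({s(0,1), s(0,2), s(0,3)} : Multiset (Sym2 (Fin 4))); intro e
    rw [SimpleGraph.edgeSet_fromEdgeSet]
    simp only [Set.mem_diff, Set.mem_insert_iff, Set.mem_singleton_iff, Set.mem_setOf_eq,
      Finset.mem_mk, Multiset.insert_eq_cons, Multiset.mem_cons, Multiset.mem_singleton]
    constructor
    · rintro ⟨h1, -⟩; exact h1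
    · intro h1; refine ⟨h1, ?_⟩
      rcases h1 with rfl | rfl | rfl <;> decide
  rw [h]

lemma edgeDeck_twoK2 : twoK2.edgeDeck = {oneK2.cls, oneK2.cls} := by
  rw [edgeDeck_eq, edgeVal_twoK2]
  show Multiset.map (fun e : Sym2 (Fin 4) => (twoK2.deleteEdge e).cls) ({s(0,1), s(2,3)} : Multiset (Sym2 (Fin 4))) = _
  simp only [Multiset.insert_eq_cons, Multiset.map_cons, Multiset.map_singleton]
  rw [cls_del_twoK2_01, cls_del_twoK2_23]

lemma edgeDeck_p3K1 : p3K1.edgeDeck = {oneK2.cls, oneK2.cls} := by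
  rw [edgeDeck_eq, edgeVal_p3K1]
  show Multiset.map (fun e : Sym2 (Fin 4) => (p3K1.deleteEdge e).cls) ({s(0,1), s(1,2)} : Multiset (Sym2 (Fin 4))) = _
  simp only [Multiset.insert_eq_cons, Multiset.map_cons, Multiset.map_singleton]
  rw [cls_del_p3K1_01, cls_del_p3K1_12]

lemma edgeDeck_k3K1 : k3K1.edgeDeck = {p3K1.cls, p3K1.cls, p3K1.cls} := by
  rw [edgeDeck_eq, edgeVal_k3K1]
  show Multiset.map (fun e : Sym2 (Fin 4) => (k3K1.deleteEdge e).cls) ({s(0,1), s(1,2), s(0,2)} : Multiset (Sym2 (Fin 4))) = _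
  simp only [Multiset.insert_eq_cons, Multiset.map_cons, Multiset.map_singleton]
  rw [cls_del_k3K1_01, cls_del_k3K1_12, cls_del_k3K1_02]

lemma edgeDeck_k13 : k13.edgeDeck = {p3K1.cls, p3K1.cls, p3K1.cls} := by
  rw [edgeDeck_eq, edgeVal_k13]
  show Multiset.map (fun e : Sym2 (Fin 4) => (k13.deleteEdge e).cls) ({s(0,1), s(0,2), s(0,3)} : Multiset (Sym2 (Fin 4))) = _
  simp only [Multiset.insert_eq_cons, Multiset.map_cons, Multiset.map_singleton]
  rw [cls_del_k13_01, cls_del_k13_02, cls_del_k13_03]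

lemma edgeCount_twoK2 : twoK2.edgeCount = 2 := by rw [edgeCount_eq, edgeVal_twoK2]; rfl
lemma edgeCount_p3K1 : p3K1.edgeCount = 2 := by rw [edgeCount_eq, edgeVal_p3K1]; rfl
lemma edgeCount_k3K1 : k3K1.edgeCount = 3 := by rw [edgeCount_eq, edgeVal_k3K1]; rfl
lemma edgeCount_k13 : k13.edgeCount = 3 := by rw [edgeCount_eq, edgeVal_k13]; rfl



/-- The inductive invariant. -/
def Good (n : ℕ) (M M' : Multiset FGraph) : Prop :=
  Multiset.card M = Multiset.card M' ∧ 1 ≤ Multiset.card M ∧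
  (∀ G ∈ M, G.edgeCount = n) ∧ (∀ G ∈ M', G.edgeCount = n) ∧
  (M.map FGraph.edgeDeck).sum = (M'.map FGraph.edgeDeck).sum ∧
  (∀ G ∈ M, hOf G % 4 = 0) ∧ (∀ G ∈ M', hOf G % 4 = 2)

lemma sum_map_map (g : GraphClass → GraphClass) (f : FGraph → Multiset GraphClass)
    (M : Multiset FGraph) :
    (M.map (fun G => (f G).map g)).sum = ((M.map f).sum).map g := by
  induction M using Multiset.induction_on with
  | empty => simp
  | cons a s ih => simp [ih]

lemma good_two : Good 2 {twoK2} {p3K1} := by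
  refine ⟨rfl, le_refl _, ?_, ?_, ?_, ?_, ?_⟩ <;>
    simp [edgeCount_twoK2, edgeCount_p3K1, edgeDeck_twoK2, edgeDeck_p3K1,
      hOf_twoK2, hOf_p3K1]

lemma good_three : Good 3 {k3K1} {k13} := by
  refine ⟨rfl, le_refl _, ?_, ?_, ?_, ?_, ?_⟩ <;>
    simp [edgeCount_k3K1, edgeCount_k13, edgeDeck_k3K1, edgeDeck_k13,
      hOf_k3K1, hOf_k13]

lemma good_step {n : ℕ} {M M' : Multiset FGraph} (h : Good n M M') :
    Good (n + 2) (M.map (·.disjUnion twoK2) + M'.map (·.disjUnion p3K1))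
      (M.map (·.disjUnion p3K1) + M'.map (·.disjUnion twoK2)) := by
  obtain ⟨hcard, hpos, hcnt, hcnt', hdeck, hh, hh'⟩ := h
  have deckAB : twoK2.edgeDeck = p3K1.edgeDeck := by
    rw [edgeDeck_twoK2, edgeDeck_p3K1]
  have key : ∀ (X : FGraph) (N : Multiset FGraph),
      ((N.map (·.disjUnion X)).map FGraph.edgeDeck).sum
        = ((N.map FGraph.edgeDeck).sum).map (fun c => mulC c X.cls)
          + (N.map (fun G => X.edgeDeck.map (fun c => mulC G.cls c))).sum := by
    intro X N
    rw [Multiset.map_map]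
    have : (N.map (FGraph.edgeDeck ∘ (·.disjUnion X)))
        = N.map (fun G => G.edgeDeck.map (fun c => mulC c X.cls)
            + X.edgeDeck.map (fun c => mulC G.cls c)) := by
      refine Multiset.map_congr rfl (fun G _ => ?_)
      exact edgeDeck_disjUnion G X
    rw [this, Multiset.sum_map_add, sum_map_map]
  constructor
  · simp [hcard]
  refine ⟨?_, ?_, ?_, ?_, ?_, ?_⟩
  · simp only [Multiset.card_add, Multiset.card_map]; omega
  · intro G hG
    rcases Multiset.mem_add.mp hG with hG | hG <;>
      obtain ⟨x, hx, rfl⟩ := Multiset.mem_map.mp hG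
    · rw [edgeCount_disjUnion, hcnt x hx, edgeCount_twoK2]
    · rw [edgeCount_disjUnion, hcnt' x hx, edgeCount_p3K1]
  · intro G hG
    rcases Multiset.mem_add.mp hG with hG | hG <;>
      obtain ⟨x, hx, rfl⟩ := Multiset.mem_map.mp hG
    · rw [edgeCount_disjUnion, hcnt x hx, edgeCount_p3K1]
    · rw [edgeCount_disjUnion, hcnt' x hx, edgeCount_twoK2]
  · rw [Multiset.map_add, Multiset.map_add, Multiset.sum_add, Multiset.sum_add,
      key, key, key, key, hdeck, deckAB]
    abel
  · intro G hG
    rcases Multiset.mem_add.mp hG with hG | hG <;>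
      obtain ⟨x, hx, rfl⟩ := Multiset.mem_map.mp hG
    · rw [hOf_disjUnion, hOf_twoK2]
      have := hh x hx; omega
    · rw [hOf_disjUnion, hOf_p3K1]
      have := hh' x hx; omega
  · intro G hG
    rcases Multiset.mem_add.mp hG with hG | hG <;>
      obtain ⟨x, hx, rfl⟩ := Multiset.mem_map.mp hG
    · rw [hOf_disjUnion, hOf_p3K1]
      have := hh x hx; omega
    · rw [hOf_disjUnion, hOf_twoK2]
      have := hh' x hx; omega

lemma good_exists : ∀ n : ℕ, 2 ≤ n → ∃ M M' : Multiset FGraph, Good n M M' := by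
  intro n
  induction n using Nat.strong_induction_on with
  | _ n ih =>
    intro hn
    match n, hn with
    | 2, _ => exact ⟨_, _, good_two⟩
    | 3, _ => exact ⟨_, _, good_three⟩
    | (m+4), _ =>
      obtain ⟨M, M', h⟩ := ih (m + 2) (by omega) (by omega)
      exact ⟨_, _, good_step h⟩


end GERAux

/-- for every `n ≥ 2` the generalized edge reconstruction conjecture
fails: there are `k ≥ 1` and two distinct multisets of `k` isomorphism classes of
graphs with exactly `n` edges whose total edge decks agree. -/
theorem generalized_edge_reconstruction_false (n : ℕ) (hn : 2 ≤ n) :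
    ∃ k : ℕ, 1 ≤ k ∧
      ∃ M M' : Multiset FGraph,
        Multiset.card M = k ∧ Multiset.card M' = k ∧
        (∀ G ∈ M, G.edgeCount = n) ∧ (∀ G ∈ M', G.edgeCount = n) ∧
        M.map FGraph.cls ≠ M'.map FGraph.cls ∧
        (M.map FGraph.edgeDeck).sum = (M'.map FGraph.edgeDeck).sum := by
  obtain ⟨M, M', hG⟩ := GERAux.good_exists n hn
  obtain ⟨hcard, hpos, hcnt, hcnt', hdeck, hh, hh'⟩ := hG
  refine ⟨Multiset.card M, hpos, M, M', rfl, hcard.symm, hcnt, hcnt', ?_, hdeck⟩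
  intro heq
  obtain ⟨G, hGmem⟩ := (Multiset.card_pos_iff_exists_mem (s := M)).mp (by omega)
  have hmem : G.cls ∈ M'.map FGraph.cls := heq ▸ Multiset.mem_map_of_mem _ hGmem
  obtain ⟨G', hG'm, hGG'⟩ := Multiset.mem_map.mp hmem
  have hiso : G' ≈ G := Quotient.exact hGG'
  have heqh := GERAux.hOf_congr hiso
  have h1 := hh G hGmem
  have h2 := hh' G' hG'm
  omega
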